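/- In the noncompliance setting with no defiers and a 3-level outcome, the probability of benefit satisfies θ ≥ P(X=0,Y=0|Z=0) + P(X=1,Y=0|Z=0) − P(X=0,Y=0|Z=1) − P(X=1,Y=0|Z=1), i.e., θ ≥ P(Y=0|Z=0) − P(Y=0|Z=1). -/

import Mathlib

open MeasureTheory

/-- IV setting with no defiers, 3-level outcome: lower bound for θ = P(Y(1) > Y(0)). -/
theorem stmt18 {Ω : Type*} [MeasurableSpace Ω] (P : Measure Ω) [IsProbabilityMeasure P]
    (Z : Ω → Fin 2) (Xp : Fin 2 → Ω → Fin 2) (Yp : Fin 2 → Ω → Fin 3)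
    (hZ : Measurable Z) (hXp : ∀ z, Measurable (Xp z)) (hYp : ∀ x, Measurable (Yp x))
    (X : Ω → Fin 2) (hX : ∀ ω, X ω = Xp (Z ω) ω)
    (Y : Ω → Fin 3) (hY : ∀ ω, Y ω = Yp (X ω) ω)
    (hnodef : ∀ ω, Xp 0 ω ≤ Xp 1 ω)
    (hindep : ∀ (z : Fin 2) (S : Set (Fin 2 × Fin 2 × Fin 3 × Fin 3)),
      P ({ω | Z ω = z} ∩ {ω | (Xp 0 ω, Xp 1 ω, Yp 0 ω, Yp 1 ω) ∈ S}) =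
        P {ω | Z ω = z} * P {ω | (Xp 0 ω, Xp 1 ω, Yp 0 ω, Yp 1 ω) ∈ S})
    (hz0 : 0 < (P {ω | Z ω = 0}).toReal) (hz1 : 0 < (P {ω | Z ω = 1}).toReal) :
    (P {ω | X ω = 0 ∧ Y ω = 0 ∧ Z ω = 0}).toReal / (P {ω | Z ω = 0}).toReal
      + (P {ω | X ω = 1 ∧ Y ω = 0 ∧ Z ω = 0}).toReal / (P {ω | Z ω = 0}).toReal
      - (P {ω | X ω = 0 ∧ Y ω = 0 ∧ Z ω = 1}).toReal / (P {ω | Z ω = 1}).toReal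
      - (P {ω | X ω = 1 ∧ Y ω = 0 ∧ Z ω = 1}).toReal / (P {ω | Z ω = 1}).toReal
      ≤ (P {ω | Yp 0 ω < Yp 1 ω}).toReal := by
  classical
  have two : ∀ x : Fin 2, x = 0 ∨ x = 1 := by decide
  have three : ∀ y : Fin 3, y ≠ 0 → (0 : Fin 3) < y := by decide
  have mono2 : ∀ a b : Fin 2, a = 1 → a ≤ b → b = 1 := by decide
  -- clean versions of the four sets
  have e00 : {ω | X ω = 0 ∧ Y ω = 0 ∧ Z ω = 0}
      = {ω | Z ω = 0} ∩ {ω | Xp 0 ω = 0 ∧ Yp 0 ω = 0} := by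
    ext ω
    simp only [Set.mem_setOf_eq, Set.mem_inter_iff]
    constructor
    · rintro ⟨hx, hy, hz⟩
      rw [hX, hz] at hx
      rw [hY, hX, hz, hx] at hy
      exact ⟨hz, hx, hy⟩
    · rintro ⟨hz, hx, hy⟩
      have hx' : X ω = 0 := by rw [hX, hz]; exact hx
      exact ⟨hx', by rw [hY, hx']; exact hy, hz⟩
  have e10 : {ω | X ω = 1 ∧ Y ω = 0 ∧ Z ω = 0}
      = {ω | Z ω = 0} ∩ {ω | Xp 0 ω = 1 ∧ Yp 1 ω = 0} := by
    ext ω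
    simp only [Set.mem_setOf_eq, Set.mem_inter_iff]
    constructor
    · rintro ⟨hx, hy, hz⟩
      rw [hX, hz] at hx
      rw [hY, hX, hz, hx] at hy
      exact ⟨hz, hx, hy⟩
    · rintro ⟨hz, hx, hy⟩
      have hx' : X ω = 1 := by rw [hX, hz]; exact hx
      exact ⟨hx', by rw [hY, hx']; exact hy, hz⟩
  have e01 : {ω | X ω = 0 ∧ Y ω = 0 ∧ Z ω = 1}
      = {ω | Z ω = 1} ∩ {ω | Xp 1 ω = 0 ∧ Yp 0 ω = 0} := by
    ext ω
    simp only [Set.mem_setOf_eq, Set.mem_inter_iff]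
    constructor
    · rintro ⟨hx, hy, hz⟩
      rw [hX, hz] at hx
      rw [hY, hX, hz, hx] at hy
      exact ⟨hz, hx, hy⟩
    · rintro ⟨hz, hx, hy⟩
      have hx' : X ω = 0 := by rw [hX, hz]; exact hx
      exact ⟨hx', by rw [hY, hx']; exact hy, hz⟩
  have e11 : {ω | X ω = 1 ∧ Y ω = 0 ∧ Z ω = 1}
      = {ω | Z ω = 1} ∩ {ω | Xp 1 ω = 1 ∧ Yp 1 ω = 0} := by
    ext ω
    simp only [Set.mem_setOf_eq, Set.mem_inter_iff]
    constructor
    · rintro ⟨hx, hy, hz⟩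
      rw [hX, hz] at hx
      rw [hY, hX, hz, hx] at hy
      exact ⟨hz, hx, hy⟩
    · rintro ⟨hz, hx, hy⟩
      have hx' : X ω = 1 := by rw [hX, hz]; exact hx
      exact ⟨hx', by rw [hY, hx']; exact hy, hz⟩
  -- the sets A and B
  set S0 : Set (Fin 2 × Fin 2 × Fin 3 × Fin 3) :=
    {p | (p.1 = 0 ∧ p.2.2.1 = 0) ∨ (p.1 = 1 ∧ p.2.2.2 = 0)} with hS0
  set S1 : Set (Fin 2 × Fin 2 × Fin 3 × Fin 3) :=
    {p | (p.2.1 = 0 ∧ p.2.2.1 = 0) ∨ (p.2.1 = 1 ∧ p.2.2.2 = 0)} with hS1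
  set A : Set Ω := {ω | (Xp 0 ω, Xp 1 ω, Yp 0 ω, Yp 1 ω) ∈ S0} with hA
  set B : Set Ω := {ω | (Xp 0 ω, Xp 1 ω, Yp 0 ω, Yp 1 ω) ∈ S1} with hB
  set C : Set Ω := {ω | Yp 0 ω < Yp 1 ω} with hCdef
  -- A ⊆ B ∪ C
  have hABC : A ⊆ B ∪ C := by
    intro ω hω
    rcases hω with ⟨hx, hy⟩ | ⟨hx, hy⟩
    · rcases two (Xp 1 ω) with h1 | h1
      · exact Or.inl (Or.inl ⟨h1, hy⟩)
      · by_cases hy1 : Yp 1 ω = 0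
        · exact Or.inl (Or.inr ⟨h1, hy1⟩)
        · refine Or.inr ?_
          show Yp 0 ω < Yp 1 ω
          have hy' : Yp 0 ω = 0 := hy
          rw [hy']
          exact three _ hy1
    · have h1 : Xp 1 ω = 1 := mono2 _ _ hx (hnodef ω)
      exact Or.inl (Or.inr ⟨h1, hy⟩)
  -- measurability
  have hZ0 : MeasurableSet {ω | Z ω = 0} := hZ (measurableSet_singleton 0)
  have hZ1 : MeasurableSet {ω | Z ω = 1} := hZ (measurableSet_singleton 1)
  have m10 : MeasurableSet {ω | Xp 0 ω = 1 ∧ Yp 1 ω = 0} :=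
    ((hXp 0) (measurableSet_singleton 1)).inter ((hYp 1) (measurableSet_singleton 0))
  have m11 : MeasurableSet {ω | Xp 1 ω = 1 ∧ Yp 1 ω = 0} :=
    ((hXp 1) (measurableSet_singleton 1)).inter ((hYp 1) (measurableSet_singleton 0))
  -- splitting identities
  have split0 : {ω | Z ω = 0} ∩ A
      = ({ω | Z ω = 0} ∩ {ω | Xp 0 ω = 0 ∧ Yp 0 ω = 0})
        ∪ ({ω | Z ω = 0} ∩ {ω | Xp 0 ω = 1 ∧ Yp 1 ω = 0}) := by
    rw [← Set.inter_union_distrib_left]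
    rfl
  have split1 : {ω | Z ω = 1} ∩ B
      = ({ω | Z ω = 1} ∩ {ω | Xp 1 ω = 0 ∧ Yp 0 ω = 0})
        ∪ ({ω | Z ω = 1} ∩ {ω | Xp 1 ω = 1 ∧ Yp 1 ω = 0}) := by
    rw [← Set.inter_union_distrib_left]
    rfl
  have d0 : Disjoint ({ω | Z ω = 0} ∩ {ω | Xp 0 ω = 0 ∧ Yp 0 ω = 0})
      ({ω | Z ω = 0} ∩ {ω | Xp 0 ω = 1 ∧ Yp 1 ω = 0}) := by
    rw [Set.disjoint_left]
    rintro ω ⟨-, hx, -⟩ ⟨-, hx', -⟩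
    rw [hx] at hx'
    exact absurd hx' (by decide)
  have d1 : Disjoint ({ω | Z ω = 1} ∩ {ω | Xp 1 ω = 0 ∧ Yp 0 ω = 0})
      ({ω | Z ω = 1} ∩ {ω | Xp 1 ω = 1 ∧ Yp 1 ω = 0}) := by
    rw [Set.disjoint_left]
    rintro ω ⟨-, hx, -⟩ ⟨-, hx', -⟩
    rw [hx] at hx'
    exact absurd hx' (by decide)
  have add0 : P ({ω | Z ω = 0} ∩ {ω | Xp 0 ω = 0 ∧ Yp 0 ω = 0})
      + P ({ω | Z ω = 0} ∩ {ω | Xp 0 ω = 1 ∧ Yp 1 ω = 0})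
      = P {ω | Z ω = 0} * P A := by
    rw [← measure_union d0 (hZ0.inter m10), ← split0]
    exact hindep 0 S0
  have add1 : P ({ω | Z ω = 1} ∩ {ω | Xp 1 ω = 0 ∧ Yp 0 ω = 0})
      + P ({ω | Z ω = 1} ∩ {ω | Xp 1 ω = 1 ∧ Yp 1 ω = 0})
      = P {ω | Z ω = 1} * P B := by
    rw [← measure_union d1 (hZ1.inter m11), ← split1]
    exact hindep 1 S1
  -- to real numbers
  have h0 : (P {ω | X ω = 0 ∧ Y ω = 0 ∧ Z ω = 0}).toReal
      + (P {ω | X ω = 1 ∧ Y ω = 0 ∧ Z ω = 0}).toReal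
      = (P {ω | Z ω = 0}).toReal * (P A).toReal := by
    rw [e00, e10, ← ENNReal.toReal_add (measure_ne_top P _) (measure_ne_top P _), add0,
      ENNReal.toReal_mul]
  have h1 : (P {ω | X ω = 0 ∧ Y ω = 0 ∧ Z ω = 1}).toReal
      + (P {ω | X ω = 1 ∧ Y ω = 0 ∧ Z ω = 1}).toReal
      = (P {ω | Z ω = 1}).toReal * (P B).toReal := by
    rw [e01, e11, ← ENNReal.toReal_add (measure_ne_top P _) (measure_ne_top P _), add1,
      ENNReal.toReal_mul]
  have hPA : (P A).toReal ≤ (P B).toReal + (P C).toReal := by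
    calc (P A).toReal ≤ (P (B ∪ C)).toReal :=
          ENNReal.toReal_mono (measure_ne_top P _) (measure_mono hABC)
      _ ≤ ((P B) + (P C)).toReal := by
          exact ENNReal.toReal_mono
            (by simp [ENNReal.add_ne_top, measure_ne_top]) (measure_union_le B C)
      _ = (P B).toReal + (P C).toReal :=
          ENNReal.toReal_add (measure_ne_top P _) (measure_ne_top P _)
  have hq0 : (P {ω | X ω = 0 ∧ Y ω = 0 ∧ Z ω = 0}).toReal / (P {ω | Z ω = 0}).toReal
      + (P {ω | X ω = 1 ∧ Y ω = 0 ∧ Z ω = 0}).toReal / (P {ω | Z ω = 0}).toReal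
      = (P A).toReal := by
    rw [← add_div, h0]
    field_simp
  have hq1 : (P {ω | X ω = 0 ∧ Y ω = 0 ∧ Z ω = 1}).toReal / (P {ω | Z ω = 1}).toReal
      + (P {ω | X ω = 1 ∧ Y ω = 0 ∧ Z ω = 1}).toReal / (P {ω | Z ω = 1}).toReal
      = (P B).toReal := by
    rw [← add_div, h1]
    field_simp
  have hgoal : (P C).toReal = (P {ω | Yp 0 ω < Yp 1 ω}).toReal := rfl
  linarith [hq0, hq1, hPA]
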